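/- Suppose x : 𝒦 → ℝ≥0 is a feasible solution to the partition LP (i.e., Σ_K x_K · rc_K^π ≥ r(π) - 1 for every partition π of R), and π, π' are two partitions that are tight for x (i.e., the corresponding constraints hold with equality). Then the meet π ∧ π' and the join π ∨ π' are also tight for x. -/

import Mathlib

open Classical

namespace SteinerLP

variable {R : Type*}

/-- Number of parts of a partition (setoid). -/
noncomputable def nparts (s : Setoid R) : ℕ := Nat.card (Quotient s)

/-- Rank contribution of a hyperedge `K` to partition `s`:
the number of parts of `s` met by `K`, minus 1. -/
noncomputable def rc (s : Setoid R) (K : Set R) : ℕ := (Quotient.mk s '' K).ncard - 1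

/-- The rank `ρ(X) = max (0, |X| - 1)` of a set. -/
noncomputable def rho (K : Set R) : ℕ := K.ncard - 1

/-- The part of the partition `s` corresponding to a class `c`. -/
def classOf (s : Setoid R) (c : Quotient s) : Set R := {x | Quotient.mk s x = c}

/-- The merged partition `m(s, S)`: all parts of `s` meeting `S` are merged into one part. -/
def merge (s : Setoid R) (S : Set R) : Setoid R where
  r x y := s.r x y ∨ ((∃ a ∈ S, s.r x a) ∧ (∃ b ∈ S, s.r y b))
  iseqv := by
    constructor
    · intro x; exact Or.inl (s.iseqv.refl x)
    · intro x y h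
      rcases h with h | ⟨ha, hb⟩
      · exact Or.inl (s.iseqv.symm h)
      · exact Or.inr ⟨hb, ha⟩
    · intro x y z hxy hyz
      rcases hxy with hxy | ⟨hx, hy⟩
      · rcases hyz with hyz | ⟨hy, hz⟩
        · exact Or.inl (s.iseqv.trans hxy hyz)
        · refine Or.inr ⟨?_, hz⟩
          rcases hy with ⟨a, haS, hya⟩
          exact ⟨a, haS, s.iseqv.trans hxy hya⟩
      · rcases hyz with hyz | ⟨hy', hz⟩
        · refine Or.inr ⟨hx, ?_⟩
          rcases hy with ⟨b, hbS, hyb⟩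
          exact ⟨b, hbS, s.iseqv.trans (s.iseqv.symm hyz) hyb⟩
        · exact Or.inr ⟨hx, hz⟩

end SteinerLP

namespace SteinerLPAux

open SteinerLP Set

set_option linter.unusedSectionVars false

variable {R : Type*} [Fintype R]

lemma mk_eq_iff {s : Setoid R} {a b : R} :
    Quotient.mk s a = Quotient.mk s b ↔ s.r a b :=
  ⟨Quotient.exact, Quotient.sound⟩

/-- number of parts of `s` met by `K`. -/
noncomputable def Nn (s : Setoid R) (K : Set R) : ℕ := (Quotient.mk s '' K).ncard

lemma Nn_mono (s : Setoid R) {K K' : Set R} (h : K ⊆ K') : Nn s K ≤ Nn s K' :=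
  Set.ncard_le_ncard (Set.image_mono h) (Set.toFinite _)

lemma Nn_empty (s : Setoid R) : Nn s ∅ = 0 := by simp [Nn]

lemma one_le_Nn {s : Setoid R} {K : Set R} (hK : K.Nonempty) : 1 ≤ Nn s K :=
  (Set.ncard_pos (Set.toFinite _)).mpr (hK.image _)

lemma Nn_univ (s : Setoid R) : Nn s Set.univ = nparts s := by
  rw [Nn, Set.image_univ, Set.range_eq_univ.mpr (fun q => Quotient.exists_rep q),
    Set.ncard_univ, nparts]

lemma ncard_image_congr {α β γ : Type*} (f : α → β) (g : α → γ) (S : Set α)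
    (h : ∀ x ∈ S, ∀ y ∈ S, (f x = f y ↔ g x = g y)) :
    (f '' S).ncard = (g '' S).ncard := by
  rcases S.eq_empty_or_nonempty with rfl | ⟨x₀, hx₀⟩
  · simp
  haveI : Nonempty α := ⟨x₀⟩
  set φ : β → γ := fun u => g (Function.invFunOn f S u) with hφ
  have key : ∀ x ∈ S, φ (f x) = g x := by
    intro x hxS
    have h1 : Function.invFunOn f S (f x) ∈ S := Function.invFunOn_mem ⟨x, hxS, rfl⟩
    have h2 : f (Function.invFunOn f S (f x)) = f x := Function.invFunOn_eq ⟨x, hxS, rfl⟩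
    exact (h _ h1 _ hxS).mp h2
  have himg : φ '' (f '' S) = g '' S := by
    ext z
    simp only [Set.mem_image]
    constructor
    · rintro ⟨u, ⟨x1, hx1, rfl⟩, rfl⟩; exact ⟨x1, hx1, (key x1 hx1).symm⟩
    · rintro ⟨x1, hx1, rfl⟩; exact ⟨f x1, ⟨x1, hx1, rfl⟩, key x1 hx1⟩
  have hinj : Set.InjOn φ (f '' S) := by
    rintro u ⟨x1, hx1, rfl⟩ v ⟨y1, hy1, rfl⟩ huv
    rw [key x1 hx1, key y1 hy1] at huv
    exact (h x1 hx1 y1 hy1).mpr huv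
  calc (f '' S).ncard = (φ '' (f '' S)).ncard := (Set.ncard_image_of_injOn hinj).symm
  _ = (g '' S).ncard := by rw [himg]

/-- the `s`-saturation of a set. -/
def sat (s : Setoid R) (T : Set R) : Set R := {x | ∃ a ∈ T, s.r x a}

lemma subset_sat (s : Setoid R) (T : Set R) : T ⊆ sat s T :=
  fun x hx => ⟨x, hx, s.iseqv.refl x⟩

lemma sat_closed {s : Setoid R} {T : Set R} {x y : R} (h : s.r x y) (hy : y ∈ sat s T) :
    x ∈ sat s T := by
  obtain ⟨a, ha, hya⟩ := hy
  exact ⟨a, ha, s.iseqv.trans h hya⟩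

lemma image_sat (s : Setoid R) (T : Set R) :
    Quotient.mk s '' (sat s T) = Quotient.mk s '' T := by
  apply Set.Subset.antisymm
  · rintro q ⟨u, ⟨a, ha, hua⟩, rfl⟩
    exact ⟨a, ha, (mk_eq_iff.mpr hua).symm⟩
  · exact Set.image_mono (subset_sat s T)

lemma Nn_sat (s : Setoid R) (T : Set R) : Nn s (sat s T) = Nn s T := by
  rw [Nn, Nn, image_sat]

lemma Nn_diff_add_inter (s : Setoid R) {B : Set R} (K : Set R)
    (hB : ∀ ⦃x y : R⦄, s.r x y → y ∈ B → x ∈ B) :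
    Nn s K = Nn s (K \ B) + Nn s (K ∩ B) := by
  have hd : Disjoint (Quotient.mk s '' (K \ B)) (Quotient.mk s '' (K ∩ B)) := by
    rw [Set.disjoint_left]
    rintro q ⟨u, ⟨huK, huB⟩, rfl⟩ ⟨v, ⟨hvK, hvB⟩, hq⟩
    exact huB (hB (mk_eq_iff.mp hq.symm) hvB)
  rw [Nn, Nn, Nn, ← Set.ncard_union_eq hd (Set.toFinite _) (Set.toFinite _),
    ← Set.image_union, Set.diff_union_inter]


lemma classOf_nonempty (s : Setoid R) (c : Quotient s) : (classOf s c).Nonempty := by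
  obtain ⟨a, ha⟩ := Quotient.exists_rep c
  exact ⟨a, ha⟩

lemma classOf_saturated {s : Setoid R} {c : Quotient s} {x y : R} (h : s.r x y)
    (hy : y ∈ classOf s c) : x ∈ classOf s c := by
  have : Quotient.mk s x = Quotient.mk s y := mk_eq_iff.mpr h
  simpa [classOf, this] using hy

/-- Counting parts after merging all parts of `s` that meet `b`. -/
lemma Nn_merge (s : Setoid R) (b K : Set R) :
    Nn (merge s b) K + Nn s (K ∩ sat s b)
      = Nn s K + (if (K ∩ sat s b).Nonempty then 1 else 0) := by
  set B := sat s b with hBdef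
  have hB : ∀ ⦃x y : R⦄, s.r x y → y ∈ B → x ∈ B := fun x y h hy => sat_closed h hy
  have hmemB : ∀ z : R, z ∈ B ↔ ∃ a ∈ b, s.r z a := fun z => Iff.rfl
  -- image decomposition for the merged setoid
  have h1 : Quotient.mk (merge s b) '' K
      = (Quotient.mk (merge s b) '' (K \ B)) ∪ (Quotient.mk (merge s b) '' (K ∩ B)) := by
    rw [← Set.image_union, Set.diff_union_inter]
  have hfib : ∀ u ∈ K \ B, ∀ v ∈ K \ B,
      (Quotient.mk (merge s b) u = Quotient.mk (merge s b) v ↔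
        Quotient.mk s u = Quotient.mk s v) := by
    rintro u ⟨-, huB⟩ v ⟨-, -⟩
    rw [mk_eq_iff, mk_eq_iff]
    constructor
    · rintro (h | ⟨hu, -⟩)
      · exact h
      · exact absurd ((hmemB u).mpr hu) huB
    · exact fun h => Or.inl h
  have hc1 : (Quotient.mk (merge s b) '' (K \ B)).ncard = Nn s (K \ B) :=
    ncard_image_congr _ _ _ hfib
  rcases (K ∩ B).eq_empty_or_nonempty with hKB | ⟨x₀, hx₀⟩
  · have hKd : K \ B = K := by
      ext z
      constructor
      · exact fun hz => hz.1
      · intro hz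
        refine ⟨hz, fun hzB => ?_⟩
        exact absurd (Set.mem_inter hz hzB) (by rw [hKB]; exact Set.notMem_empty z)
    rw [hKB, Nn_empty, if_neg (by simp)]
    simp only [add_zero]
    rw [Nn, h1, hKB, Set.image_empty, Set.union_empty, hc1, hKd]
  · have hsing : Quotient.mk (merge s b) '' (K ∩ B) = {Quotient.mk (merge s b) x₀} := by
      apply Set.Subset.antisymm
      · rintro q ⟨v, hv, rfl⟩
        have : (merge s b).r v x₀ := Or.inr ⟨(hmemB v).mp hv.2, (hmemB x₀).mp hx₀.2⟩
        exact mk_eq_iff.mpr this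
      · rintro q rfl
        exact ⟨x₀, hx₀, rfl⟩
    have hdisj : Disjoint (Quotient.mk (merge s b) '' (K \ B))
        (Quotient.mk (merge s b) '' (K ∩ B)) := by
      rw [Set.disjoint_left]
      rintro q ⟨u, ⟨-, huB⟩, rfl⟩ ⟨v, hv, hq⟩
      have hr : (merge s b).r u v := mk_eq_iff.mp hq.symm
      rcases hr with h | ⟨hu, -⟩
      · exact huB (hB h hv.2)
      · exact huB ((hmemB u).mpr hu)
    have hm : Nn (merge s b) K = Nn s (K \ B) + 1 := by
      rw [Nn, h1, Set.ncard_union_eq hdisj (Set.toFinite _) (Set.toFinite _), hc1, hsing,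
        Set.ncard_singleton]
    have hsplit : Nn s K = Nn s (K \ B) + Nn s (K ∩ B) := Nn_diff_add_inter s K hB
    rw [hm, hsplit, if_pos ⟨x₀, hx₀⟩]
    omega

/-- Refine the class `c` of `s` according to `p`. -/
def splitAt (s p : Setoid R) (c : Quotient s) : Setoid R where
  r x y := s.r x y ∧ (Quotient.mk s x = c → p.r x y)
  iseqv := by
    constructor
    · exact fun x => ⟨s.iseqv.refl x, fun _ => p.iseqv.refl x⟩
    · rintro x y ⟨hs, hp⟩
      refine ⟨s.iseqv.symm hs, fun hy => ?_⟩
      have hx : Quotient.mk s x = c := (mk_eq_iff.mpr hs).trans hy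
      exact p.iseqv.symm (hp hx)
    · rintro x y z ⟨hs1, hp1⟩ ⟨hs2, hp2⟩
      refine ⟨s.iseqv.trans hs1 hs2, fun hx => ?_⟩
      have hy : Quotient.mk s y = c := (mk_eq_iff.mpr (s.iseqv.symm hs1)).trans hx
      exact p.iseqv.trans (hp1 hx) (hp2 hy)

lemma Nn_splitAt (s p : Setoid R) (c : Quotient s) (K : Set R) :
    Nn (splitAt s p c) K + (if (K ∩ classOf s c).Nonempty then 1 else 0)
      = Nn s K + Nn p (K ∩ classOf s c) := by
  set a := classOf s c with hadef
  set τ := splitAt s p c with hτdef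
  have hamem : ∀ z : R, z ∈ a ↔ Quotient.mk s z = c := fun z => Iff.rfl
  have ha : ∀ ⦃x y : R⦄, s.r x y → y ∈ a → x ∈ a := fun x y h hy => classOf_saturated h hy
  have h1 : Quotient.mk τ '' K = (Quotient.mk τ '' (K \ a)) ∪ (Quotient.mk τ '' (K ∩ a)) := by
    rw [← Set.image_union, Set.diff_union_inter]
  have hc1 : (Quotient.mk τ '' (K \ a)).ncard = Nn s (K \ a) := by
    apply ncard_image_congr
    rintro u ⟨-, hua⟩ v ⟨-, -⟩
    rw [mk_eq_iff, mk_eq_iff]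
    exact ⟨fun h => h.1, fun h => ⟨h, fun hu => absurd ((hamem u).mpr hu) hua⟩⟩
  have hc2 : (Quotient.mk τ '' (K ∩ a)).ncard = Nn p (K ∩ a) := by
    apply ncard_image_congr
    rintro u ⟨-, hua⟩ v ⟨-, hva⟩
    rw [mk_eq_iff, mk_eq_iff]
    constructor
    · exact fun h => h.2 ((hamem u).mp hua)
    · intro h
      have hs : s.r u v := mk_eq_iff.mp (((hamem u).mp hua).trans ((hamem v).mp hva).symm)
      exact ⟨hs, fun _ => h⟩
  have hdisj : Disjoint (Quotient.mk τ '' (K \ a)) (Quotient.mk τ '' (K ∩ a)) := by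
    rw [Set.disjoint_left]
    rintro q ⟨u, ⟨-, hua⟩, rfl⟩ ⟨v, hv, hq⟩
    have hr : τ.r u v := mk_eq_iff.mp hq.symm
    exact hua (ha hr.1 hv.2)
  have hτK : Nn τ K = Nn s (K \ a) + Nn p (K ∩ a) := by
    rw [Nn, h1, Set.ncard_union_eq hdisj (Set.toFinite _) (Set.toFinite _), hc1, hc2]
  have hsub : Quotient.mk s '' (K ∩ a) ⊆ {c} := by
    rintro q ⟨v, hv, rfl⟩
    exact (hamem v).mp hv.2
  have hsK : Nn s K = Nn s (K \ a) + (if (K ∩ a).Nonempty then 1 else 0) := by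
    rw [Nn_diff_add_inter s K ha]
    congr 1
    rcases (K ∩ a).eq_empty_or_nonempty with h | ⟨x₀, hx₀⟩
    · rw [h, Nn_empty, if_neg (by simp)]
    · rw [if_pos ⟨x₀, hx₀⟩, Nn]
      have : Quotient.mk s '' (K ∩ a) = {c} :=
        Set.Subset.antisymm hsub (by rintro q rfl; exact ⟨x₀, hx₀, (hamem x₀).mp hx₀.2⟩)
      rw [this, Set.ncard_singleton]
  rw [hτK, hsK]
  ring

lemma nparts_merge (s : Setoid R) {b : Set R} (hb : b.Nonempty) :
    nparts (merge s b) + Nn s b = nparts s + 1 := by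
  have h := Nn_merge s b Set.univ
  rw [Set.univ_inter] at h
  obtain ⟨z, hz⟩ := hb
  rw [Nn_univ, Nn_univ, Nn_sat, if_pos ⟨z, subset_sat s b hz⟩] at h
  exact h

lemma nparts_splitAt (s p : Setoid R) (c : Quotient s) :
    nparts (splitAt s p c) + 1 = nparts s + Nn p (classOf s c) := by
  have h := Nn_splitAt s p c Set.univ
  rw [Set.univ_inter, Nn_univ, Nn_univ, if_pos (classOf_nonempty s c)] at h
  exact h

lemma cast_rc {K : Set R} (hK : K.Nonempty) (s : Setoid R) :
    (rc s K : ℝ) = (Nn s K : ℝ) - 1 := by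
  have h1 : 1 ≤ Nn s K := one_le_Nn hK
  have h2 : rc s K = Nn s K - 1 := rfl
  rw [h2, Nat.cast_sub h1, Nat.cast_one]

lemma nparts_mono {s t : Setoid R} (h : s ≤ t) : nparts t ≤ nparts s := by
  have hsurj : Function.Surjective
      (Quotient.lift (Quotient.mk t)
        (fun a b hab => Quotient.sound (Setoid.le_def.mp h hab)) : Quotient s → Quotient t) := by
    intro q
    obtain ⟨a, rfl⟩ := Quotient.exists_rep q
    exact ⟨Quotient.mk s a, rfl⟩
  exact Nat.card_le_card_of_surjective _ hsurj

section LP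

variable {𝒦 : Finset (Set R)} {x : Set R → ℝ}

/-- Merging a tight partition along a class of another tight partition stays tight. -/
lemma tight_merge (hKne : ∀ K ∈ 𝒦, K.Nonempty) (hx : ∀ K ∈ 𝒦, 0 ≤ x K)
    (hfeas : ∀ σ : Setoid R, (nparts σ : ℝ) - 1 ≤ ∑ K ∈ 𝒦, x K * rc σ K)
    {σ p : Setoid R}
    (hσ : ∑ K ∈ 𝒦, x K * rc σ K = (nparts σ : ℝ) - 1)
    (hp : ∑ K ∈ 𝒦, x K * rc p K = (nparts p : ℝ) - 1)
    (c : Quotient p) :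
    ∑ K ∈ 𝒦, x K * rc (merge σ (classOf p c)) K
      = (nparts (merge σ (classOf p c)) : ℝ) - 1 := by
  set b := classOf p c with hbdef
  have hbne : b.Nonempty := classOf_nonempty p c
  set B := sat σ b with hBdef
  set D : Set R → ℝ := fun K => (Nn σ (K ∩ B) : ℝ) - (if (K ∩ B).Nonempty then 1 else 0)
    with hDdef
  set d : Set R → ℝ := fun K => (Nn σ (K ∩ b) : ℝ) - (if (K ∩ b).Nonempty then 1 else 0)
    with hddef
  have hrcm : ∀ K ∈ 𝒦, (rc (merge σ b) K : ℝ) = (rc σ K : ℝ) - D K := by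
    intro K hK
    have h' := congrArg (fun n : ℕ => (n : ℝ)) (Nn_merge σ b K)
    push_cast at h'
    rw [cast_rc (hKne K hK), cast_rc (hKne K hK)]
    simp only [hDdef]
    rw [← hBdef] at h'
    by_cases hne : (K ∩ B).Nonempty
    · rw [if_pos hne] at h' ⊢; linarith
    · rw [if_neg hne] at h' ⊢; linarith
  have hsum1 : ∑ K ∈ 𝒦, x K * rc (merge σ b) K
      = (nparts σ : ℝ) - 1 - ∑ K ∈ 𝒦, x K * D K := by
    have : ∑ K ∈ 𝒦, x K * rc (merge σ b) K
        = ∑ K ∈ 𝒦, (x K * rc σ K - x K * D K) :=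
      Finset.sum_congr rfl (fun K hK => by rw [hrcm K hK]; ring)
    rw [this, Finset.sum_sub_distrib, hσ]
  -- feasibility at the split of p's class c by σ
  set φ := splitAt p σ c with hφdef
  have hrcφ : ∀ K ∈ 𝒦, (rc φ K : ℝ) = (rc p K : ℝ) + d K := by
    intro K hK
    have h' := congrArg (fun n : ℕ => (n : ℝ)) (Nn_splitAt p σ c K)
    push_cast at h'
    rw [cast_rc (hKne K hK), cast_rc (hKne K hK)]
    simp only [hddef]
    rw [← hbdef] at h'
    by_cases hne : (K ∩ b).Nonempty
    · rw [if_pos hne] at h' ⊢; linarith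
    · rw [if_neg hne] at h' ⊢; linarith
  have hnφ : (nparts φ : ℝ) = (nparts p : ℝ) + (Nn σ b : ℝ) - 1 := by
    have h' := congrArg (fun n : ℕ => (n : ℝ)) (nparts_splitAt p σ c)
    push_cast at h'
    rw [← hbdef] at h'
    linarith
  have hd : (Nn σ b : ℝ) - 1 ≤ ∑ K ∈ 𝒦, x K * d K := by
    have hfφ := hfeas φ
    have hs : ∑ K ∈ 𝒦, x K * rc φ K
        = ((nparts p : ℝ) - 1) + ∑ K ∈ 𝒦, x K * d K := by
      have : ∑ K ∈ 𝒦, x K * rc φ K = ∑ K ∈ 𝒦, (x K * rc p K + x K * d K) :=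
        Finset.sum_congr rfl (fun K hK => by rw [hrcφ K hK]; ring)
      rw [this, Finset.sum_add_distrib, hp]
    rw [hs, hnφ] at hfφ
    linarith
  have hdD : ∀ K ∈ 𝒦, d K ≤ D K := by
    intro K _
    have hsub : K ∩ b ⊆ K ∩ B :=
      Set.inter_subset_inter_right K (subset_sat σ b)
    by_cases hKb : (K ∩ b).Nonempty
    · have h1 : (K ∩ B).Nonempty := hKb.mono hsub
      simp only [hDdef, hddef, if_pos hKb, if_pos h1]
      have hmono : Nn σ (K ∩ b) ≤ Nn σ (K ∩ B) := Nn_mono σ hsub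
      have : (Nn σ (K ∩ b) : ℝ) ≤ Nn σ (K ∩ B) := by exact_mod_cast hmono
      linarith
    · have h0 : K ∩ b = ∅ := Set.not_nonempty_iff_eq_empty.mp hKb
      simp only [hddef, hDdef, h0, Nn_empty, if_neg (by simp : ¬(∅ : Set R).Nonempty)]
      by_cases hKB : (K ∩ B).Nonempty
      · rw [if_pos hKB]
        have : 1 ≤ Nn σ (K ∩ B) := one_le_Nn hKB
        have : (1 : ℝ) ≤ Nn σ (K ∩ B) := by exact_mod_cast this
        push_cast
        linarith
      · rw [if_neg hKB]
        have h0' : K ∩ B = ∅ := Set.not_nonempty_iff_eq_empty.mp hKB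
        rw [h0', Nn_empty]
  have hsumdD : ∑ K ∈ 𝒦, x K * d K ≤ ∑ K ∈ 𝒦, x K * D K :=
    Finset.sum_le_sum fun K hK => mul_le_mul_of_nonneg_left (hdD K hK) (hx K hK)
  have hnm : (nparts (merge σ b) : ℝ) = (nparts σ : ℝ) + 1 - (Nn σ b : ℝ) := by
    have h' := congrArg (fun n : ℕ => (n : ℝ)) (nparts_merge σ hbne)
    push_cast at h'
    linarith
  have hle : ∑ K ∈ 𝒦, x K * rc (merge σ b) K ≤ (nparts (merge σ b) : ℝ) - 1 := by
    rw [hsum1, hnm]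
    linarith
  exact le_antisymm hle (hfeas _)

/-- Splitting a class of a tight partition along another tight partition stays tight. -/
lemma tight_splitAt (hKne : ∀ K ∈ 𝒦, K.Nonempty) (hx : ∀ K ∈ 𝒦, 0 ≤ x K)
    (hfeas : ∀ σ : Setoid R, (nparts σ : ℝ) - 1 ≤ ∑ K ∈ 𝒦, x K * rc σ K)
    {σ p : Setoid R}
    (hσ : ∑ K ∈ 𝒦, x K * rc σ K = (nparts σ : ℝ) - 1)
    (hp : ∑ K ∈ 𝒦, x K * rc p K = (nparts p : ℝ) - 1)
    (c : Quotient σ) :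
    ∑ K ∈ 𝒦, x K * rc (splitAt σ p c) K = (nparts (splitAt σ p c) : ℝ) - 1 := by
  set a := classOf σ c with hadef
  have hane : a.Nonempty := classOf_nonempty σ c
  set A := sat p a with hAdef
  set E : Set R → ℝ := fun K => (Nn p (K ∩ A) : ℝ) - (if (K ∩ A).Nonempty then 1 else 0)
    with hEdef
  set e : Set R → ℝ := fun K => (Nn p (K ∩ a) : ℝ) - (if (K ∩ a).Nonempty then 1 else 0)
    with hedef
  have hrcτ : ∀ K ∈ 𝒦, (rc (splitAt σ p c) K : ℝ) = (rc σ K : ℝ) + e K := by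
    intro K hK
    have h' := congrArg (fun n : ℕ => (n : ℝ)) (Nn_splitAt σ p c K)
    push_cast at h'
    rw [cast_rc (hKne K hK), cast_rc (hKne K hK)]
    simp only [hedef]
    rw [← hadef] at h'
    by_cases hne : (K ∩ a).Nonempty
    · rw [if_pos hne] at h' ⊢; linarith
    · rw [if_neg hne] at h' ⊢; linarith
  have hsum1 : ∑ K ∈ 𝒦, x K * rc (splitAt σ p c) K
      = (nparts σ : ℝ) - 1 + ∑ K ∈ 𝒦, x K * e K := by
    have : ∑ K ∈ 𝒦, x K * rc (splitAt σ p c) K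
        = ∑ K ∈ 𝒦, (x K * rc σ K + x K * e K) :=
      Finset.sum_congr rfl (fun K hK => by rw [hrcτ K hK]; ring)
    rw [this, Finset.sum_add_distrib, hσ]
  -- feasibility at the merge of p along a
  have hrcψ : ∀ K ∈ 𝒦, (rc (merge p a) K : ℝ) = (rc p K : ℝ) - E K := by
    intro K hK
    have h' := congrArg (fun n : ℕ => (n : ℝ)) (Nn_merge p a K)
    push_cast at h'
    rw [cast_rc (hKne K hK), cast_rc (hKne K hK)]
    simp only [hEdef]
    rw [← hAdef] at h'
    by_cases hne : (K ∩ A).Nonempty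
    · rw [if_pos hne] at h' ⊢; linarith
    · rw [if_neg hne] at h' ⊢; linarith
  have hnψ : (nparts (merge p a) : ℝ) = (nparts p : ℝ) + 1 - (Nn p a : ℝ) := by
    have h' := congrArg (fun n : ℕ => (n : ℝ)) (nparts_merge p hane)
    push_cast at h'
    linarith
  have hE : ∑ K ∈ 𝒦, x K * E K ≤ (Nn p a : ℝ) - 1 := by
    have hfψ := hfeas (merge p a)
    have hs : ∑ K ∈ 𝒦, x K * rc (merge p a) K
        = ((nparts p : ℝ) - 1) - ∑ K ∈ 𝒦, x K * E K := by
      have : ∑ K ∈ 𝒦, x K * rc (merge p a) K = ∑ K ∈ 𝒦, (x K * rc p K - x K * E K) :=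
        Finset.sum_congr rfl (fun K hK => by rw [hrcψ K hK]; ring)
      rw [this, Finset.sum_sub_distrib, hp]
    rw [hs, hnψ] at hfψ
    linarith
  have heE : ∀ K ∈ 𝒦, e K ≤ E K := by
    intro K _
    have hsub : K ∩ a ⊆ K ∩ A :=
      Set.inter_subset_inter_right K (subset_sat p a)
    by_cases hKa : (K ∩ a).Nonempty
    · have h1 : (K ∩ A).Nonempty := hKa.mono hsub
      simp only [hEdef, hedef, if_pos hKa, if_pos h1]
      have hmono : Nn p (K ∩ a) ≤ Nn p (K ∩ A) := Nn_mono p hsub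
      have : (Nn p (K ∩ a) : ℝ) ≤ Nn p (K ∩ A) := by exact_mod_cast hmono
      linarith
    · have h0 : K ∩ a = ∅ := Set.not_nonempty_iff_eq_empty.mp hKa
      simp only [hedef, hEdef, h0, Nn_empty, if_neg (by simp : ¬(∅ : Set R).Nonempty)]
      by_cases hKA : (K ∩ A).Nonempty
      · rw [if_pos hKA]
        have h1 : 1 ≤ Nn p (K ∩ A) := one_le_Nn hKA
        have : (1 : ℝ) ≤ Nn p (K ∩ A) := by exact_mod_cast h1
        push_cast
        linarith
      · rw [if_neg hKA]
        have h0' : K ∩ A = ∅ := Set.not_nonempty_iff_eq_empty.mp hKA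
        rw [h0', Nn_empty]
  have hsumeE : ∑ K ∈ 𝒦, x K * e K ≤ ∑ K ∈ 𝒦, x K * E K :=
    Finset.sum_le_sum fun K hK => mul_le_mul_of_nonneg_left (heE K hK) (hx K hK)
  have hnτ : (nparts (splitAt σ p c) : ℝ) = (nparts σ : ℝ) + (Nn p a : ℝ) - 1 := by
    have h' := congrArg (fun n : ℕ => (n : ℝ)) (nparts_splitAt σ p c)
    push_cast at h'
    rw [← hadef] at h'
    linarith
  have hle : ∑ K ∈ 𝒦, x K * rc (splitAt σ p c) K ≤ (nparts (splitAt σ p c) : ℝ) - 1 := by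
    rw [hsum1, hnτ]
    linarith
  exact le_antisymm hle (hfeas _)

end LP


section Induction

variable {𝒦 : Finset (Set R)} {x : Set R → ℝ}

lemma tight_sup_aux (hKne : ∀ K ∈ 𝒦, K.Nonempty) (hx : ∀ K ∈ 𝒦, 0 ≤ x K)
    (hfeas : ∀ σ : Setoid R, (nparts σ : ℝ) - 1 ≤ ∑ K ∈ 𝒦, x K * rc σ K)
    {p : Setoid R} (hp : ∑ K ∈ 𝒦, x K * rc p K = (nparts p : ℝ) - 1) :
    ∀ n : ℕ, ∀ σ : Setoid R, nparts σ ≤ n →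
      (∑ K ∈ 𝒦, x K * rc σ K = (nparts σ : ℝ) - 1) →
      ∑ K ∈ 𝒦, x K * rc (σ ⊔ p) K = (nparts (σ ⊔ p) : ℝ) - 1 := by
  intro n
  induction n with
  | zero =>
    intro σ hn hσ
    have hemp : IsEmpty (Quotient σ) := by
      have h0 : Nat.card (Quotient σ) = 0 := Nat.le_zero.mp hn
      rcases Nat.card_eq_zero.mp h0 with h | h
      · exact h
      · exact absurd h (not_infinite_iff_finite.mpr inferInstance)
    have hle : p ≤ σ := fun u v _ => (hemp.false (Quotient.mk σ u)).elim
    rwa [sup_eq_left.mpr hle]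
  | succ n ih =>
    intro σ hn hσ
    by_cases hle : p ≤ σ
    · rwa [sup_eq_left.mpr hle]
    · have hex : ∃ u v : R, p.r u v ∧ ¬ σ.r u v := by
        by_contra hcon
        push_neg at hcon
        exact hle (fun u v huv => hcon u v huv)
      obtain ⟨u, v, hpuv, hnsuv⟩ := hex
      set c := Quotient.mk p u with hc
      set b := classOf p c with hb
      have hub : u ∈ b := rfl
      have hvb : v ∈ b := mk_eq_iff.mpr (p.iseqv.symm (hpuv))
      have h2 : 2 ≤ Nn σ b := by
        have h1 : 1 < (Quotient.mk σ '' b).ncard := by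
          rw [Set.one_lt_ncard_iff (Set.toFinite _)]
          exact ⟨Quotient.mk σ u, Quotient.mk σ v, ⟨u, hub, rfl⟩, ⟨v, hvb, rfl⟩,
            fun h => hnsuv (mk_eq_iff.mp h)⟩
        exact h1
      have hτ := tight_merge hKne hx hfeas hσ hp c
      have hnm := nparts_merge σ (classOf_nonempty p c)
      have hlt : nparts (merge σ b) ≤ n := by
        rw [hb] at *
        omega
      have hkey : (merge σ b) ⊔ p = σ ⊔ p := by
        have h1 : σ ≤ merge σ b := fun u' v' h => Or.inl h
        have h2' : merge σ b ≤ σ ⊔ p := by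
          intro w z hwz
          rcases hwz with h | ⟨⟨a1, ha1, hw1⟩, ⟨a2, ha2, hz2⟩⟩
          · exact Setoid.le_def.mp le_sup_left h
          · have hp12 : p.r a1 a2 := mk_eq_iff.mp (ha1.trans ha2.symm)
            have hs1 : (σ ⊔ p) w a1 := Setoid.le_def.mp le_sup_left hw1
            have hs2 : (σ ⊔ p) a1 a2 := Setoid.le_def.mp le_sup_right hp12
            have hs3 : (σ ⊔ p) a2 z := Setoid.le_def.mp le_sup_left (σ.iseqv.symm hz2)
            exact (σ ⊔ p).iseqv.trans hs1 ((σ ⊔ p).iseqv.trans hs2 hs3)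
        exact le_antisymm (sup_le h2' le_sup_right)
          (sup_le (h1.trans le_sup_left) le_sup_right)
      have hres := ih (merge σ b) hlt hτ
      rwa [hkey] at hres

lemma tight_sup (hKne : ∀ K ∈ 𝒦, K.Nonempty) (hx : ∀ K ∈ 𝒦, 0 ≤ x K)
    (hfeas : ∀ σ : Setoid R, (nparts σ : ℝ) - 1 ≤ ∑ K ∈ 𝒦, x K * rc σ K)
    {σ p : Setoid R}
    (hσ : ∑ K ∈ 𝒦, x K * rc σ K = (nparts σ : ℝ) - 1)
    (hp : ∑ K ∈ 𝒦, x K * rc p K = (nparts p : ℝ) - 1) :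
    ∑ K ∈ 𝒦, x K * rc (σ ⊔ p) K = (nparts (σ ⊔ p) : ℝ) - 1 :=
  tight_sup_aux hKne hx hfeas hp (nparts σ) σ le_rfl hσ

lemma inf_step (hKne : ∀ K ∈ 𝒦, K.Nonempty) (hx : ∀ K ∈ 𝒦, 0 ≤ x K)
    (hfeas : ∀ σ : Setoid R, (nparts σ : ℝ) - 1 ≤ ∑ K ∈ 𝒦, x K * rc σ K)
    {σ p : Setoid R}
    (hσ : ∑ K ∈ 𝒦, x K * rc σ K = (nparts σ : ℝ) - 1)
    (hp : ∑ K ∈ 𝒦, x K * rc p K = (nparts p : ℝ) - 1)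
    (hnle : ¬ σ ≤ p) :
    ∃ τ : Setoid R, (∑ K ∈ 𝒦, x K * rc τ K = (nparts τ : ℝ) - 1) ∧
      nparts σ < nparts τ ∧ τ ⊓ p = σ ⊓ p := by
  have hex : ∃ u v : R, σ.r u v ∧ ¬ p.r u v := by
    by_contra hcon
    push_neg at hcon
    exact hnle (fun u v huv => hcon u v huv)
  obtain ⟨u, v, hσuv, hnpuv⟩ := hex
  set c := Quotient.mk σ u with hc
  set a := classOf σ c with ha
  have hua : u ∈ a := rfl
  have hva : v ∈ a := mk_eq_iff.mpr (σ.iseqv.symm hσuv)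
  have h2 : 2 ≤ Nn p a := by
    have h1 : 1 < (Quotient.mk p '' a).ncard := by
      rw [Set.one_lt_ncard_iff (Set.toFinite _)]
      exact ⟨Quotient.mk p u, Quotient.mk p v, ⟨u, hua, rfl⟩, ⟨v, hva, rfl⟩,
        fun h => hnpuv (mk_eq_iff.mp h)⟩
    exact h1
  refine ⟨splitAt σ p c, tight_splitAt hKne hx hfeas hσ hp c, ?_, ?_⟩
  · have hns := nparts_splitAt σ p c
    rw [← ha] at hns
    omega
  · have hτσ : splitAt σ p c ≤ σ := fun _ _ h => h.1
    have hlow : σ ⊓ p ≤ splitAt σ p c := by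
      intro w z hwz
      have h' := Setoid.inf_iff_and.mp hwz
      exact ⟨h'.1, fun _ => h'.2⟩
    exact le_antisymm (inf_le_inf_right p hτσ) (le_inf hlow inf_le_right)

lemma tight_inf (hKne : ∀ K ∈ 𝒦, K.Nonempty) (hx : ∀ K ∈ 𝒦, 0 ≤ x K)
    (hfeas : ∀ σ : Setoid R, (nparts σ : ℝ) - 1 ≤ ∑ K ∈ 𝒦, x K * rc σ K)
    {σ p : Setoid R}
    (hσ : ∑ K ∈ 𝒦, x K * rc σ K = (nparts σ : ℝ) - 1)
    (hp : ∑ K ∈ 𝒦, x K * rc p K = (nparts p : ℝ) - 1) :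
    ∑ K ∈ 𝒦, x K * rc (σ ⊓ p) K = (nparts (σ ⊓ p) : ℝ) - 1 := by
  suffices h : ∀ n : ℕ, ∀ σ' : Setoid R, nparts (σ' ⊓ p) - nparts σ' ≤ n →
      (∑ K ∈ 𝒦, x K * rc σ' K = (nparts σ' : ℝ) - 1) →
      ∑ K ∈ 𝒦, x K * rc (σ' ⊓ p) K = (nparts (σ' ⊓ p) : ℝ) - 1 by
    exact h (nparts (σ ⊓ p) - nparts σ) σ le_rfl hσ
  intro n
  induction n with
  | zero =>
    intro σ' hn hσ'
    by_cases hle : σ' ≤ p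
    · rwa [inf_eq_left.mpr hle]
    · exfalso
      obtain ⟨τ, -, hlt, hinf⟩ := inf_step hKne hx hfeas hσ' hp hle
      have h1 : nparts τ ≤ nparts (τ ⊓ p) := nparts_mono inf_le_left
      rw [hinf] at h1
      omega
  | succ n ih =>
    intro σ' hn hσ'
    by_cases hle : σ' ≤ p
    · rwa [inf_eq_left.mpr hle]
    · obtain ⟨τ, hτ, hlt, hinf⟩ := inf_step hKne hx hfeas hσ' hp hle
      have h1 : nparts τ ≤ nparts (τ ⊓ p) := nparts_mono inf_le_left
      have hmeas : nparts (τ ⊓ p) - nparts τ ≤ n := by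
        rw [hinf] at h1 ⊢
        omega
      have hres := ih τ hmeas hτ
      rwa [hinf] at hres

end Induction


end SteinerLPAux

open SteinerLP in
/-- if `x ≥ 0` is feasible for the partition LP and partitions `π, π'` are tight,
then so are the meet `π ⊓ π'` and the join `π ⊔ π'`. -/
theorem tight_inf_and_sup_of_tight {R : Type*} [Fintype R]
    (𝒦 : Finset (Set R)) (hKne : ∀ K ∈ 𝒦, K.Nonempty)
    (x : Set R → ℝ) (hx : ∀ K ∈ 𝒦, 0 ≤ x K)
    (hfeas : ∀ σ : Setoid R, (nparts σ : ℝ) - 1 ≤ ∑ K ∈ 𝒦, x K * rc σ K)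
    (π π' : Setoid R)
    (hπ : ∑ K ∈ 𝒦, x K * rc π K = (nparts π : ℝ) - 1)
    (hπ' : ∑ K ∈ 𝒦, x K * rc π' K = (nparts π' : ℝ) - 1) :
    (∑ K ∈ 𝒦, x K * rc (π ⊓ π') K = (nparts (π ⊓ π') : ℝ) - 1) ∧
    (∑ K ∈ 𝒦, x K * rc (π ⊔ π') K = (nparts (π ⊔ π') : ℝ) - 1) :=
  ⟨SteinerLPAux.tight_inf hKne hx hfeas hπ hπ',
   SteinerLPAux.tight_sup hKne hx hfeas hπ hπ'⟩
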